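/- Let Φ : ℝ^{3m} → ℝ^{3m} be the linear map sending the basis vector e_j to e_{j''} - e_{j'}, where j, j', j'' are the counterclockwise-ordered corner labels of the triangle containing corner j. If θ satisfies the edge equations θ_j + θ_{j'} = π - α(e) and the triangle equations θ_j + θ_{j'} + θ_{j''} = π, then for any oriented transverse path γ with associated vector T_γ (whose j-th coordinate counts algebraically the traversals of the corner j), θ + Φ(T_γ) also satisfies both families of equations. -/
import Mathlib


open Finset Real

/-- A combinatorial triangulation `O = (V, E, F)` of the torus with `m`
triangles. `Cor` is the set of the `3m` corners of triangles; `tri j` is the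
triangle containing the corner `j`, `vert j` its vertex, `opp j` the edge of
its triangle opposite to it; `nxt` is the counterclockwise next corner inside
each triangle (a fixed-point free rotation of order 3 on each fiber of `tri`);
`sgm j` is the other corner opposite to the same edge `opp j`, in the triangle
adjacent across that edge.  The cardinality axioms encode `|F| = m`,
`2|E| = 3m`, `2|V| = m` (so `χ = V - E + F = 0`, as for the torus), and the
last axiom says that the two endpoints of an edge (namely the vertices of the
two other corners of an adjacent triangle) do not depend, as an unordered
pair, on the side from which they are computed. -/
structure TorusTriangulation (Cor F E V : Type*)
    [Fintype Cor] [DecidableEq Cor] [Fintype F] [DecidableEq F]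
    [Fintype E] [DecidableEq E] [Fintype V] [DecidableEq V] where
  m : ℕ
  hm : 0 < m
  tri : Cor → F
  vert : Cor → V
  opp : Cor → E
  nxt : Cor → Cor
  sgm : Cor → Cor
  card_cor : Fintype.card Cor = 3 * m
  card_faces : Fintype.card F = m
  card_edges : 2 * Fintype.card E = 3 * m
  card_verts : 2 * Fintype.card V = m
  tri_nxt : ∀ j, tri (nxt j) = tri j
  nxt_nxt_nxt : ∀ j, nxt (nxt (nxt j)) = j
  nxt_ne : ∀ j, nxt j ≠ j
  tri_fiber : ∀ j k, tri j = tri k → k = j ∨ k = nxt j ∨ k = nxt (nxt j)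
  sgm_sgm : ∀ j, sgm (sgm j) = j
  sgm_ne : ∀ j, sgm j ≠ j
  opp_sgm : ∀ j, opp (sgm j) = opp j
  opp_fiber : ∀ j k, opp j = opp k → k = j ∨ k = sgm j
  opp_surj : Function.Surjective opp
  endpoints_sgm : ∀ j, ({vert (nxt j), vert (nxt (nxt j))} : Multiset V) =
    {vert (nxt (sgm j)), vert (nxt (nxt (sgm j)))}

variable {Cor F E V : Type*}
    [Fintype Cor] [DecidableEq Cor] [Fintype F] [DecidableEq F]
    [Fintype E] [DecidableEq E] [Fintype V] [DecidableEq V]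

namespace TorusTriangulation

variable (T : TorusTriangulation Cor F E V)

/-- A crossing of a triangle by a transverse path is recorded as a pair
`(j, b)`: the path pivots around the corner `j`, and `b = true` when the path
makes a left (pivots counterclockwise, entering through the edge `opp (nxt² j)`
and exiting through the edge `opp (nxt j)`), `b = false` for a right. -/
def exitCorner (c : Cor × Bool) : Cor :=
  if c.2 then T.nxt c.1 else T.nxt (T.nxt c.1)

/-- The corner of the entry edge of a crossing (see `exitCorner`). -/
def entryCorner (c : Cor × Bool) : Cor :=
  if c.2 then T.nxt (T.nxt c.1) else T.nxt c.1

/-- A closed transverse path, given as a cyclic sequence of `n + 1` triangle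
crossings: the exit edge of each crossing is the entry edge of the next one,
seen from the adjacent triangle (opposite corners exchanged by `sgm`). -/
def IsTransversePath {n : ℕ} (γ : Fin (n + 1) → Cor × Bool) : Prop :=
  ∀ s : Fin (n + 1), T.entryCorner (γ (s + 1)) = T.sgm (T.exitCorner (γ s))

/-- The vector `T_γ ∈ ℝ^{3m}`: its `j`-th coordinate is the algebraic number
of times `γ` traverses the angular sector of the corner `j` (left traversals
count `+1`, right traversals `-1`). -/
def pathVector {n : ℕ} (γ : Fin (n + 1) → Cor × Bool) : Cor → ℝ :=
  fun j => ∑ s : Fin (n + 1),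
    ((if γ s = (j, true) then (1 : ℝ) else 0) -
     (if γ s = (j, false) then (1 : ℝ) else 0))

/-- The linear map `Φ : ℝ^{3m} → ℝ^{3m}` sending the basis vector `e_j` to
`e_{j''} - e_{j'}`, where `(j, j', j'') = (j, nxt j, nxt² j)` are the
counterclockwise-ordered corners of the triangle of `j`; in coordinates,
`(Φ v) j = v (nxt j) - v (nxt² j)`. -/
def phi (v : Cor → ℝ) : Cor → ℝ :=
  fun j => v (T.nxt j) - v (T.nxt (T.nxt j))

end TorusTriangulation

open TorusTriangulation

namespace TorusTriangulation

variable (T : TorusTriangulation Cor F E V)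

lemma nxt_eq_iff (a b : Cor) : T.nxt a = b ↔ a = T.nxt (T.nxt b) := by
  constructor
  · rintro rfl; rw [T.nxt_nxt_nxt]
  · rintro rfl; exact T.nxt_nxt_nxt b

lemma sgm_eq_iff (a b : Cor) : T.sgm a = b ↔ a = T.sgm b := by
  constructor
  · rintro rfl; rw [T.sgm_sgm]
  · rintro rfl; exact T.sgm_sgm b

lemma phi_pathVector {n : ℕ} (γ : Fin (n + 1) → Cor × Bool) (j : Cor) :
    T.phi (pathVector γ) j = ∑ s : Fin (n + 1),
      ((if T.entryCorner (γ s) = j then (1 : ℝ) else 0) -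
       (if T.exitCorner (γ s) = j then (1 : ℝ) else 0)) := by
  unfold phi pathVector
  rw [← Finset.sum_sub_distrib]
  refine Finset.sum_congr rfl fun s _ => ?_
  rcases hs : γ s with ⟨c, b⟩
  cases b <;>
    simp only [entryCorner, exitCorner, Prod.mk.injEq, Bool.true_eq_false,
      Bool.false_eq_true, and_false, and_true, if_false, if_true, ite_false,
      T.nxt_eq_iff] <;>
  · rw [T.nxt_nxt_nxt]
    by_cases h1 : c = T.nxt j <;> by_cases h2 : c = T.nxt (T.nxt j) <;>
      simp [h1, h2, eq_comm] <;> ring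

lemma phi_edge {n : ℕ} (γ : Fin (n + 1) → Cor × Bool)
    (hγ : T.IsTransversePath γ) (j : Cor) :
    T.phi (pathVector γ) j + T.phi (pathVector γ) (T.sgm j) = 0 := by
  rw [T.phi_pathVector, T.phi_pathVector]
  have hA : ∀ s : Fin (n + 1),
      (T.entryCorner (γ s) = T.sgm j) ↔ (T.exitCorner (γ (s - 1)) = j) := by
    intro s
    have h := hγ (s - 1)
    rw [sub_add_cancel] at h
    rw [h, T.sgm_eq_iff, T.sgm_sgm]
  have hB : ∀ s : Fin (n + 1),
      (T.exitCorner (γ s) = T.sgm j) ↔ (T.entryCorner (γ (s + 1)) = j) := by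
    intro s
    rw [hγ s, T.sgm_eq_iff]
  have e1 : (∑ s : Fin (n + 1), (if T.entryCorner (γ s) = T.sgm j then (1 : ℝ) else 0))
      = ∑ s : Fin (n + 1), (if T.exitCorner (γ s) = j then (1 : ℝ) else 0) := by
    rw [Finset.sum_congr rfl fun s _ => by rw [if_congr (hA s) rfl rfl]]
    exact Fintype.sum_equiv (Equiv.subRight (1 : Fin (n + 1))) _ _ (fun s => rfl)
  have e2 : (∑ s : Fin (n + 1), (if T.exitCorner (γ s) = T.sgm j then (1 : ℝ) else 0))
      = ∑ s : Fin (n + 1), (if T.entryCorner (γ s) = j then (1 : ℝ) else 0) := by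
    rw [Finset.sum_congr rfl fun s _ => by rw [if_congr (hB s) rfl rfl]]
    exact Fintype.sum_equiv (Equiv.addRight (1 : Fin (n + 1))) _ _ (fun s => rfl)
  rw [Finset.sum_sub_distrib, Finset.sum_sub_distrib, e1, e2]
  ring

lemma phi_tri (v : Cor → ℝ) (j : Cor) :
    T.phi v j + T.phi v (T.nxt j) + T.phi v (T.nxt (T.nxt j)) = 0 := by
  simp only [phi, T.nxt_nxt_nxt]
  ring

end TorusTriangulation

/-- Proposition 3.2: if `θ` satisfies the edge equations
`θⱼ + θ_{σj} = π - α(opp j)` and the triangle equations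
`θⱼ + θ_{nxt j} + θ_{nxt² j} = π`, then for any closed transverse path `γ`
the deformed point `θ + Φ(T_γ)` satisfies both families of equations. -/
theorem deform_preserves_equations (T : TorusTriangulation Cor F E V)
    (θ : Cor → ℝ) (α : E → ℝ)
    (hedge : ∀ j, θ j + θ (T.sgm j) = π - α (T.opp j))
    (htri : ∀ j, θ j + θ (T.nxt j) + θ (T.nxt (T.nxt j)) = π)
    {n : ℕ} (γ : Fin (n + 1) → Cor × Bool) (hγ : T.IsTransversePath γ) :
    (∀ j, (θ j + T.phi (pathVector γ) j) +
        (θ (T.sgm j) + T.phi (pathVector γ) (T.sgm j)) = π - α (T.opp j)) ∧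
    (∀ j, (θ j + T.phi (pathVector γ) j) +
        (θ (T.nxt j) + T.phi (pathVector γ) (T.nxt j)) +
        (θ (T.nxt (T.nxt j)) + T.phi (pathVector γ) (T.nxt (T.nxt j))) = π) := by
  constructor
  · intro j
    have h := T.phi_edge γ hγ j
    have := hedge j
    linarith
  · intro j
    have h := T.phi_tri (pathVector γ) j
    have := htri j
    linarith
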